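/- Let M be a matroid on a finite ground set U and let w : U → ℝ be a nonnegative weight function. Suppose A is a basis of M of maximum total weight, i.e., w(A) ≥ w(B') for every basis B' of M. Then for every basis B of M there exists a bijection f : A → B such that for every x ∈ A the set (B \ {f(x)}) ∪ {x} is a basis of M and w(f(x)) ≤ w(x); moreover, f(x) = x for every x ∈ A ∩ B. -/
import Mathlib


open Classical

/-- A matroid on a finite ground set `α`, given by its independent sets. -/
structure FinMatroid (α : Type*) [DecidableEq α] [Fintype α] where
  /-- The independent sets. -/
  Indep : Finset α → Prop
  indep_empty : Indep ∅
  indep_subset : ∀ ⦃I J : Finset α⦄, Indep J → I ⊆ J → Indep I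
  indep_exchange : ∀ ⦃I J : Finset α⦄, Indep I → Indep J → I.card < J.card →
    ∃ e ∈ J, e ∉ I ∧ Indep (insert e I)

namespace FinMatroid

variable {α : Type*} [DecidableEq α] [Fintype α]

/-- A basis of the matroid: a maximal independent set. -/
def Base (M : FinMatroid α) (B : Finset α) : Prop :=
  M.Indep B ∧ ∀ e : α, e ∉ B → ¬ M.Indep (insert e B)

/-- The rank of a set: the size of a largest independent subset. -/
noncomputable def rank (M : FinMatroid α) (S : Finset α) : ℕ :=
  (S.powerset.filter M.Indep).sup Finset.card

/-- The span of a set: the elements whose insertion does not increase the rank. -/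
noncomputable def span (M : FinMatroid α) (S : Finset α) : Finset α :=
  Finset.univ.filter fun e => M.rank (insert e S) = M.rank S

end FinMatroid

namespace FinMatroid

variable {α : Type*} [DecidableEq α] [Fintype α]

variable {M : FinMatroid α} {S T I J : Finset α} {e : α}

/-- maximal independent subset of S -/
def MaxIn (M : FinMatroid α) (I S : Finset α) : Prop :=
  I ⊆ S ∧ M.Indep I ∧ ∀ e ∈ S, e ∉ I → ¬ M.Indep (insert e I)

lemma card_le_rank (hI : M.Indep I) (hIS : I ⊆ S) : I.card ≤ M.rank S :=
  Finset.le_sup (by simp [Finset.mem_filter, Finset.mem_powerset, hI, hIS])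

lemma rank_le_card : M.rank S ≤ S.card := by
  apply Finset.sup_le
  intro I hI
  simp only [Finset.mem_filter, Finset.mem_powerset] at hI
  exact Finset.card_le_card hI.1

lemma exists_rank_witness (S : Finset α) : ∃ I ⊆ S, M.Indep I ∧ I.card = M.rank S := by
  have hne : (S.powerset.filter M.Indep).Nonempty :=
    ⟨∅, by simp [M.indep_empty]⟩
  obtain ⟨I, hI, hcard⟩ := Finset.exists_mem_eq_sup _ hne Finset.card
  simp only [Finset.mem_filter, Finset.mem_powerset] at hI
  exact ⟨I, hI.1, hI.2, hcard.symm⟩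

lemma MaxIn.card_eq (h : M.MaxIn I S) : I.card = M.rank S := by
  refine le_antisymm (card_le_rank h.2.1 h.1) ?_
  by_contra hlt
  push_neg at hlt
  obtain ⟨J, hJS, hJi, hJc⟩ := exists_rank_witness (M := M) S
  obtain ⟨e, heJ, heI, hins⟩ := M.indep_exchange h.2.1 hJi (by omega)
  exact h.2.2 e (hJS heJ) heI hins

lemma exists_maxIn_extend_aux : ∀ (n : ℕ) (I : Finset α), S.card - I.card ≤ n →
    M.Indep I → I ⊆ S → ∃ J, I ⊆ J ∧ M.MaxIn J S := by
  intro n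
  induction n with
  | zero =>
    intro I hn hI hIS
    refine ⟨I, Finset.Subset.refl I, hIS, hI, ?_⟩
    intro e heS heI _
    have := Finset.card_lt_card (Finset.ssubset_iff_of_subset hIS |>.2 ⟨e, heS, heI⟩)
    omega
  | succ n ih =>
    intro I hn hI hIS
    by_cases h : ∀ e ∈ S, e ∉ I → ¬ M.Indep (insert e I)
    · exact ⟨I, Finset.Subset.refl I, hIS, hI, h⟩
    · push_neg at h
      obtain ⟨e, heS, heI, hins⟩ := h
      have hc : (insert e I).card = I.card + 1 := Finset.card_insert_of_notMem heI
      obtain ⟨J, hIJ, hJ⟩ := ih (insert e I) (by omega) hins (Finset.insert_subset heS hIS)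
      exact ⟨J, (Finset.subset_insert e I).trans hIJ, hJ⟩

lemma exists_maxIn_extend (hI : M.Indep I) (hIS : I ⊆ S) : ∃ J, I ⊆ J ∧ M.MaxIn J S :=
  exists_maxIn_extend_aux (S.card - I.card) I le_rfl hI hIS

lemma exists_maxIn (S : Finset α) : ∃ J, M.MaxIn J S := by
  obtain ⟨J, _, hJ⟩ := exists_maxIn_extend (M := M) M.indep_empty (Finset.empty_subset S)
  exact ⟨J, hJ⟩

lemma mem_span_iff : e ∈ M.span S ↔ M.rank (insert e S) = M.rank S := by
  simp [span]

lemma subset_span : S ⊆ M.span S := by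
  intro e he
  rw [mem_span_iff, Finset.insert_eq_self.2 he]

lemma rank_mono (h : S ⊆ T) : M.rank S ≤ M.rank T := by
  apply Finset.sup_le
  intro I hI
  simp only [Finset.mem_filter, Finset.mem_powerset] at hI
  exact card_le_rank hI.2 (hI.1.trans h)

lemma mem_span_of_maxIn_not_indep (hI : M.MaxIn I S) (hne : ¬ M.Indep (insert e I)) :
    e ∈ M.span S := by
  rw [mem_span_iff]
  refine le_antisymm ?_ (rank_mono (Finset.subset_insert e S))
  have : M.MaxIn I (insert e S) := by
    refine ⟨hI.1.trans (Finset.subset_insert e S), hI.2.1, ?_⟩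
    intro f hf hfI
    rcases Finset.mem_insert.1 hf with rfl | hfS
    · exact fun _ => hne (by assumption)
    · exact hI.2.2 f hfS hfI
  rw [← this.card_eq, hI.card_eq]

lemma notMem_span_of_indep (hI : M.MaxIn I S) (hins : M.Indep (insert e I)) (heI : e ∉ I)
    (heS : e ∉ S) : e ∉ M.span S := by
  rw [mem_span_iff]
  intro h
  have h1 : (insert e I).card ≤ M.rank (insert e S) :=
    card_le_rank hins (Finset.insert_subset_insert e hI.1)
  rw [h, ← hI.card_eq, Finset.card_insert_of_notMem heI] at h1
  omega

lemma span_mono (hST : S ⊆ T) : M.span S ⊆ M.span T := by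
  intro e he
  by_cases heT : e ∈ T
  · exact subset_span heT
  obtain ⟨I, hI⟩ := exists_maxIn (M := M) S
  have hne : ¬ M.Indep (insert e I) := by
    intro hins
    by_cases heI : e ∈ I
    · exact heT (hST (hI.1 heI))
    · exact notMem_span_of_indep hI hins heI (fun h => heT (hST h)) he
  obtain ⟨J, hIJ, hJ⟩ := exists_maxIn_extend hI.2.1 (hI.1.trans hST)
  have hneJ : ¬ M.Indep (insert e J) := fun h =>
    hne (M.indep_subset h (Finset.insert_subset_insert e hIJ))
  exact mem_span_of_maxIn_not_indep hJ hneJ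

lemma maxIn_union_of_subset_span (hI : M.MaxIn I S) (hQ : Q ⊆ M.span S) :
    M.MaxIn I (S ∪ Q) := by
  refine ⟨hI.1.trans Finset.subset_union_left, hI.2.1, ?_⟩
  intro t ht htI hins
  rcases Finset.mem_union.1 ht with htS | htQ
  · exact hI.2.2 t htS htI hins
  · by_cases htS : t ∈ S
    · exact hI.2.2 t htS htI hins
    · exact notMem_span_of_indep hI hins htI htS (hQ htQ)

lemma rank_union_eq_of_subset_span (hQ : Q ⊆ M.span S) : M.rank (S ∪ Q) = M.rank S := by
  obtain ⟨I, hI⟩ := exists_maxIn (M := M) S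
  rw [← (maxIn_union_of_subset_span hI hQ).card_eq, hI.card_eq]

lemma span_union_subset (hQ : Q ⊆ M.span S) : M.span (S ∪ Q) ⊆ M.span S := by
  intro e he
  obtain ⟨I, hI⟩ := exists_maxIn (M := M) S
  have hI' := maxIn_union_of_subset_span hI hQ
  by_cases heS : e ∈ S
  · exact subset_span heS
  by_cases heI : e ∈ I
  · exact subset_span (hI.1 heI)
  have hne : ¬ M.Indep (insert e I) := by
    intro hins
    have h1 : (insert e I).card ≤ M.rank (insert e (S ∪ Q)) :=
      card_le_rank hins (Finset.insert_subset_insert e hI'.1)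
    rw [mem_span_iff.1 he, ← hI'.card_eq, Finset.card_insert_of_notMem heI] at h1
    omega
  exact mem_span_of_maxIn_not_indep hI hne

lemma span_helper {P Q R : Finset α} {x : α} (hx : x ∈ M.span (P ∪ Q)) (hQ : Q ⊆ M.span R) :
    x ∈ M.span (P ∪ R) := by
  have h1 : x ∈ M.span ((P ∪ R) ∪ Q) := span_mono (by
    intro t ht
    rcases Finset.mem_union.1 ht with h | h
    · exact Finset.mem_union_left _ (Finset.mem_union_left _ h)
    · exact Finset.mem_union_right _ h) hx
  exact span_union_subset (hQ.trans (span_mono Finset.subset_union_right)) h1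


lemma Base.card_eq (hB : M.Base B) : B.card = M.rank Finset.univ := by
  have : M.MaxIn B Finset.univ :=
    ⟨Finset.subset_univ B, hB.1, fun e _ heB => hB.2 e heB⟩
  exact this.card_eq

lemma base_of_indep_card (hI : M.Indep I) (hc : I.card = M.rank Finset.univ) : M.Base I := by
  refine ⟨hI, ?_⟩
  intro e heI hins
  have h1 : (insert e I).card ≤ M.rank Finset.univ :=
    card_le_rank hins (Finset.subset_univ _)
  rw [Finset.card_insert_of_notMem heI, hc] at h1
  omega

/-- A minimal dependence-creating subset (fundamental circuit minus x). -/
lemma exists_circuit (hS : M.Indep S) (hx : ¬ M.Indep (insert x S)) :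
    ∃ C ⊆ S, ¬ M.Indep (insert x C) ∧ ∀ y ∈ C, M.Indep (insert x (C.erase y)) := by
  classical
  obtain ⟨C, hC, hmin⟩ := Finset.exists_min_image
    ((S.powerset).filter (fun C => ¬ M.Indep (insert x C))) Finset.card
    ⟨S, by simp [hx]⟩
  simp only [Finset.mem_filter, Finset.mem_powerset] at hC
  refine ⟨C, hC.1, hC.2, ?_⟩
  intro y hyC
  by_contra hne
  have hsub : C.erase y ∈ (S.powerset).filter (fun C => ¬ M.Indep (insert x C)) := by
    simp only [Finset.mem_filter, Finset.mem_powerset]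
    exact ⟨(Finset.erase_subset y C).trans hC.1, hne⟩
  have := hmin _ hsub
  have := Finset.card_erase_lt_of_mem hyC
  omega

/-- x not in S, C circuit witness: x ∈ span C. -/
lemma mem_span_circuit {C : Finset α} (hC : M.Indep C) (hx : ¬ M.Indep (insert x C)) :
    x ∈ M.span C := by
  have hmax : M.MaxIn C C := ⟨Finset.Subset.refl C, hC, fun e heC heC' => absurd heC heC'⟩
  exact mem_span_of_maxIn_not_indep hmax hx

/-- Key exchange: if B is a base, x ∉ B, C ⊆ B with ¬Indep(insert x C) minimal,
then for y ∈ C, insert x (B.erase y) is a base. -/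
lemma exchange_base {B C : Finset α} (hB : M.Base B) (hxB : x ∉ B) (hCB : C ⊆ B)
    (hxC : ¬ M.Indep (insert x C)) (hy : y ∈ C)
    (hyI : M.Indep (insert x (C.erase y))) :
    M.Base (insert x (B.erase y)) := by
  have hyB : y ∈ B := hCB hy
  have hxCe : x ∉ C.erase y := fun h => hxB (hCB (Finset.mem_of_mem_erase h))
  have hsub : insert x (C.erase y) ⊆ insert x (B.erase y) :=
    Finset.insert_subset_insert x (Finset.erase_subset_erase y hCB)
  obtain ⟨J, hIJ, hJ⟩ := exists_maxIn_extend hyI hsub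
  have hxJ : x ∈ J := hIJ (Finset.mem_insert_self x _)
  have hyJ : y ∉ J := fun h => by
    have := hJ.1 h
    rcases Finset.mem_insert.1 this with h' | h'
    · exact hxB (h' ▸ hyB)
    · exact (Finset.notMem_erase y B) h'
  have hcard : J.card = B.card := by
    by_contra hne
    have hlt : J.card < B.card := by
      have h1 : J.card ≤ (insert x (B.erase y)).card := Finset.card_le_card hJ.1
      have h2 : (insert x (B.erase y)).card = B.card := by
        rw [Finset.card_insert_of_notMem (fun h => hxB (Finset.mem_of_mem_erase h)),
          Finset.card_erase_of_mem hyB]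
        have := Finset.card_pos.2 ⟨y, hyB⟩
        omega
      omega
    obtain ⟨e, heB, heJ, hins⟩ := M.indep_exchange hJ.2.1 hB.1 hlt
    by_cases hey : e = y
    · subst hey
      -- insert y J indep, but then insert x C ⊆ insert y J
      have hCsub : insert x C ⊆ insert e J := by
        intro t ht
        rcases Finset.mem_insert.1 ht with rfl | htC
        · exact Finset.mem_insert_of_mem hxJ
        · by_cases hte : t = e
          · exact hte ▸ Finset.mem_insert_self e J
          · exact Finset.mem_insert_of_mem (hIJ (Finset.mem_insert_of_mem
              (Finset.mem_erase.2 ⟨hte, htC⟩)))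
      exact hxC (M.indep_subset hins hCsub)
    · exact hJ.2.2 e (Finset.mem_insert_of_mem (Finset.mem_erase.2 ⟨hey, heB⟩)) heJ hins
  have hJeq : J = insert x (B.erase y) := by
    apply Finset.eq_of_subset_of_card_le hJ.1
    rw [hcard, Finset.card_insert_of_notMem (fun h => hxB (Finset.mem_of_mem_erase h)),
      Finset.card_erase_of_mem hyB]
    have := Finset.card_pos.2 ⟨y, hyB⟩
    omega
  have : M.Indep (insert x (B.erase y)) := hJeq ▸ hJ.2.1
  apply base_of_indep_card this
  rw [← hJeq, hcard, hB.card_eq]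


section Weights

variable {w : α → ℝ} {A B : Finset α}

lemma weight_exchange_le (hA : M.Base A)
    (hAmax : ∀ B' : Finset α, M.Base B' → ∑ e ∈ B', w e ≤ ∑ e ∈ A, w e)
    {h a : α} (ha : a ∈ A) (hh : h ∉ A) (hbase : M.Base (insert h (A.erase a))) :
    w h ≤ w a := by
  have hsum := hAmax _ hbase
  rw [Finset.sum_insert (fun hmem => hh (Finset.mem_of_mem_erase hmem)),
    Finset.sum_erase_eq_sub ha] at hsum
  linarith

lemma mem_span_filter_ge (hA : M.Base A)
    (hAmax : ∀ B' : Finset α, M.Base B' → ∑ e ∈ B', w e ≤ ∑ e ∈ A, w e) (h : α) :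
    h ∈ M.span (A.filter fun a => w h ≤ w a) := by
  by_cases hhA : h ∈ A
  · exact subset_span (Finset.mem_filter.2 ⟨hhA, le_refl _⟩)
  · have hdep : ¬ M.Indep (insert h A) := hA.2 h hhA
    obtain ⟨C, hCA, hCdep, hCmin⟩ := exists_circuit hA.1 hdep
    have hCind : M.Indep C := M.indep_subset hA.1 hCA
    have hsub : C ⊆ A.filter fun a => w h ≤ w a := by
      intro a haC
      refine Finset.mem_filter.2 ⟨hCA haC, ?_⟩
      exact weight_exchange_le hA hAmax (hCA haC) hhA
        (exchange_base hA hhA hCA hCdep haC (hCmin a haC))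
    exact span_mono hsub (mem_span_circuit hCind hCdep)

/-- The weighted exchange neighborhood. -/
noncomputable def nbhd (M : FinMatroid α) (w : α → ℝ) (A B : Finset α) (x : α) : Finset α :=
  (B \ A).filter (fun y => M.Base (insert x (B.erase y)) ∧ w y ≤ w x)

lemma mem_span_nbhd (hA : M.Base A)
    (hAmax : ∀ B' : Finset α, M.Base B' → ∑ e ∈ B', w e ≤ ∑ e ∈ A, w e)
    (hB : M.Base B) {x : α} (hxA : x ∈ A) (hxB : x ∉ B) :
    x ∈ M.span ((nbhd M w A B x ∪ (A ∩ B)) ∪ A.filter (fun a => w x < w a)) := by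
  have hdep : ¬ M.Indep (insert x B) := hB.2 x hxB
  obtain ⟨C, hCB, hCdep, hCmin⟩ := exists_circuit hB.1 hdep
  have hCind : M.Indep C := M.indep_subset hB.1 hCB
  have hxC : x ∈ M.span C := mem_span_circuit hCind hCdep
  set P : Finset α := nbhd M w A B x ∪ (A ∩ B)
  set Q : Finset α := C.filter (fun y => w x < w y)
  have hCPQ : C ⊆ P ∪ Q := by
    intro y hyC
    by_cases hwy : w y ≤ w x
    · have hbase : M.Base (insert x (B.erase y)) :=
        exchange_base hB hxB hCB hCdep hyC (hCmin y hyC)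
      by_cases hyA : y ∈ A
      · exact Finset.mem_union_left _ (Finset.mem_union_right _
          (Finset.mem_inter.2 ⟨hyA, hCB hyC⟩))
      · exact Finset.mem_union_left _ (Finset.mem_union_left _
          (Finset.mem_filter.2 ⟨Finset.mem_sdiff.2 ⟨hCB hyC, hyA⟩, hbase, hwy⟩))
    · exact Finset.mem_union_right _ (Finset.mem_filter.2 ⟨hyC, not_le.1 hwy⟩)
  have hQspan : Q ⊆ M.span (A.filter (fun a => w x < w a)) := by
    intro q hq
    have hq' := Finset.mem_filter.1 hq
    have h1 : q ∈ M.span (A.filter fun a => w q ≤ w a) := mem_span_filter_ge hA hAmax q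
    refine span_mono ?_ h1
    intro a ha
    have ha' := Finset.mem_filter.1 ha
    exact Finset.mem_filter.2 ⟨ha'.1, lt_of_lt_of_le hq'.2 ha'.2⟩
  exact span_helper (span_mono hCPQ hxC) hQspan

set_option maxHeartbeats 1000000 in
lemma hall_condition (hA : M.Base A)
    (hAmax : ∀ B' : Finset α, M.Base B' → ∑ e ∈ B', w e ≤ ∑ e ∈ A, w e)
    (hB : M.Base B) (S : Finset α) (hS : S ⊆ A \ B) :
    S.card ≤ (S.biUnion (nbhd M w A B)).card := by
  set T : Finset α := S.biUnion (nbhd M w A B) with hT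
  -- main claim: every x ∈ S lies in span (T ∪ (A \ S))
  have key : ∀ n : ℕ, ∀ x ∈ S, (S.filter (fun s => w x < w s)).card ≤ n →
      x ∈ M.span (T ∪ (A \ S)) := by
    intro n
    induction n with
    | zero =>
      intro x hxS hcard
      have hxA : x ∈ A := (Finset.mem_sdiff.1 (hS hxS)).1
      have hxB : x ∉ B := (Finset.mem_sdiff.1 (hS hxS)).2
      have h1 := mem_span_nbhd hA hAmax hB hxA hxB
      refine span_mono ?_ h1
      intro t ht
      rcases Finset.mem_union.1 ht with h | h
      · rcases Finset.mem_union.1 h with h' | h'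
        · exact Finset.mem_union_left _ (Finset.subset_biUnion_of_mem _ hxS h')
        · have h'' := Finset.mem_inter.1 h'
          refine Finset.mem_union_right _ (Finset.mem_sdiff.2 ⟨h''.1, fun hts => ?_⟩)
          exact (Finset.mem_sdiff.1 (hS hts)).2 h''.2
      · -- heavier element of A; can't be in S because filter card 0
        have h' := Finset.mem_filter.1 h
        refine Finset.mem_union_right _ (Finset.mem_sdiff.2 ⟨h'.1, fun hts => ?_⟩)
        have : t ∈ S.filter (fun s => w x < w s) := Finset.mem_filter.2 ⟨hts, h'.2⟩
        have := Finset.card_pos.2 ⟨t, this⟩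
        omega
    | succ n ih =>
      intro x hxS hcard
      have hxA : x ∈ A := (Finset.mem_sdiff.1 (hS hxS)).1
      have hxB : x ∉ B := (Finset.mem_sdiff.1 (hS hxS)).2
      have h1 := mem_span_nbhd hA hAmax hB hxA hxB
      have h2 : x ∈ M.span ((T ∪ (A \ S)) ∪ S.filter (fun s => w x < w s)) := by
        refine span_mono ?_ h1
        intro t ht
        rcases Finset.mem_union.1 ht with h | h
        · rcases Finset.mem_union.1 h with h' | h'
          · exact Finset.mem_union_left _ (Finset.mem_union_left _
              (Finset.subset_biUnion_of_mem _ hxS h'))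
          · have h'' := Finset.mem_inter.1 h'
            refine Finset.mem_union_left _ (Finset.mem_union_right _
              (Finset.mem_sdiff.2 ⟨h''.1, fun hts => ?_⟩))
            exact (Finset.mem_sdiff.1 (hS hts)).2 h''.2
        · have h' := Finset.mem_filter.1 h
          by_cases hts : t ∈ S
          · exact Finset.mem_union_right _ (Finset.mem_filter.2 ⟨hts, h'.2⟩)
          · exact Finset.mem_union_left _ (Finset.mem_union_right _
              (Finset.mem_sdiff.2 ⟨h'.1, hts⟩))
      have h3 : S.filter (fun s => w x < w s) ⊆ M.span (T ∪ (A \ S)) := by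
        intro s hs
        have hs' := Finset.mem_filter.1 hs
        apply ih s hs'.1
        have hsub : S.filter (fun t => w s < w t) ⊆ (S.filter (fun t => w x < w t)).erase s := by
          intro t ht
          have ht' := Finset.mem_filter.1 ht
          refine Finset.mem_erase.2 ⟨fun h => ?_, Finset.mem_filter.2
            ⟨ht'.1, lt_trans hs'.2 ht'.2⟩⟩
          exact absurd (h ▸ ht'.2) (lt_irrefl _)
        have h4 := Finset.card_le_card hsub
        have h5 := Finset.card_erase_of_mem hs
        omega
      exact span_union_subset h3 h2
  have hA_span : (A : Finset α) ⊆ M.span (T ∪ (A \ S)) := by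
    intro a haA
    by_cases haS : a ∈ S
    · exact key (S.filter (fun s => w a < w s)).card a haS le_rfl
    · exact subset_span (Finset.mem_union_right _ (Finset.mem_sdiff.2 ⟨haA, haS⟩))
  have hrank : M.rank (T ∪ (A \ S)) = M.rank ((T ∪ (A \ S)) ∪ A) :=
    (rank_union_eq_of_subset_span hA_span).symm
  have hrank2 : A.card ≤ M.rank (T ∪ (A \ S)) := by
    rw [hrank]
    exact card_le_rank hA.1 Finset.subset_union_right
  have hcardle : M.rank (T ∪ (A \ S)) ≤ (T ∪ (A \ S)).card := rank_le_card
  have hunion : (T ∪ (A \ S)).card ≤ T.card + (A \ S).card := Finset.card_union_le _ _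
  have hSA : S ⊆ A := hS.trans (Finset.sdiff_subset)
  have hsd : (A \ S).card = A.card - S.card := Finset.card_sdiff_of_subset hSA
  have hSle : S.card ≤ A.card := Finset.card_le_card hSA
  omega

end Weights


end FinMatroid

/-- Monotone basis exchange (Lemma 2.4 of BFG19): if `A` is a maximum-weight basis and `B` is
any basis, there is a bijection `f : A → B` with `B - f(x) + x` a basis and
`w (f x) ≤ w x` for all `x ∈ A`, fixing `A ∩ B` pointwise. -/
theorem stmt_0 {α : Type*} [DecidableEq α] [Fintype α] (M : FinMatroid α)
    (w : α → ℝ) (hw : ∀ e : α, 0 ≤ w e)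
    (A : Finset α) (hA : M.Base A)
    (hAmax : ∀ B' : Finset α, M.Base B' → ∑ e ∈ B', w e ≤ ∑ e ∈ A, w e)
    (B : Finset α) (hB : M.Base B) :
    ∃ f : A ≃ B,
      (∀ x : A, M.Base (insert (x : α) (B.erase ((f x : α)))) ∧ w (f x) ≤ w x) ∧
      (∀ x : A, (x : α) ∈ B → ((f x : α) = (x : α))) := by
  classical
  have hcardAB : A.card = B.card := by
    rw [FinMatroid.Base.card_eq hA, FinMatroid.Base.card_eq hB]
  set t : {x // x ∈ A \ B} → Finset α := fun x => FinMatroid.nbhd M w A B x.val with ht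
  have hall : ∀ s : Finset {x // x ∈ A \ B}, s.card ≤ (s.biUnion t).card := by
    intro s
    have h1 : (s.image Subtype.val).card = s.card :=
      Finset.card_image_of_injective _ Subtype.val_injective
    have h2 : (s.image Subtype.val) ⊆ A \ B := by
      intro a ha
      obtain ⟨x, _, rfl⟩ := Finset.mem_image.1 ha
      exact x.2
    have h3 := FinMatroid.hall_condition hA hAmax hB _ h2
    rw [Finset.image_biUnion] at h3
    rw [h1] at h3
    exact h3
  obtain ⟨g, hginj, hgmem⟩ := (Finset.all_card_le_biUnion_card_iff_exists_injective t).1 hall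
  have hgprop : ∀ x : {x // x ∈ A \ B}, g x ∈ B \ A ∧
      M.Base (insert x.val (B.erase (g x))) ∧ w (g x) ≤ w x.val := by
    intro x
    have h := hgmem x
    simp only [ht, FinMatroid.nbhd, Finset.mem_filter] at h
    exact ⟨h.1, h.2.1, h.2.2⟩
  -- build the bijection A → B
  set F : {a // a ∈ A} → {b // b ∈ B} := fun a =>
    if h : (a : α) ∈ B then ⟨a, h⟩
    else ⟨g ⟨a, Finset.mem_sdiff.2 ⟨a.2, h⟩⟩,
      (Finset.mem_sdiff.1 (hgprop ⟨a, Finset.mem_sdiff.2 ⟨a.2, h⟩⟩).1).1⟩ with hF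
  have hFinj : Function.Injective F := by
    intro a1 a2 heq
    by_cases h1 : (a1 : α) ∈ B <;> by_cases h2 : (a2 : α) ∈ B
    · simp only [hF, dif_pos h1, dif_pos h2, Subtype.mk.injEq] at heq
      exact Subtype.ext heq
    · exfalso
      simp only [hF, dif_pos h1, dif_neg h2, Subtype.mk.injEq] at heq
      have hgA : g ⟨a2, Finset.mem_sdiff.2 ⟨a2.2, h2⟩⟩ ∉ A :=
        (Finset.mem_sdiff.1 (hgprop _).1).2
      exact hgA (heq ▸ a1.2)
    · exfalso
      simp only [hF, dif_neg h1, dif_pos h2, Subtype.mk.injEq] at heq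
      have hgA : g ⟨a1, Finset.mem_sdiff.2 ⟨a1.2, h1⟩⟩ ∉ A :=
        (Finset.mem_sdiff.1 (hgprop _).1).2
      exact hgA (heq ▸ a2.2)
    · simp only [hF, dif_neg h1, dif_neg h2, Subtype.mk.injEq] at heq
      have := hginj heq
      simp only [Subtype.mk.injEq] at this
      exact Subtype.ext this
  have hFbij : Function.Bijective F := by
    rw [Fintype.bijective_iff_injective_and_card]
    refine ⟨hFinj, ?_⟩
    simp [Fintype.card_coe, hcardAB]
  refine ⟨Equiv.ofBijective F hFbij, ?_, ?_⟩
  · intro x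
    by_cases h : (x : α) ∈ B
    · have hval : ((Equiv.ofBijective F hFbij) x : α) = (x : α) := by
        simp [Equiv.ofBijective, hF, dif_pos h]
      rw [hval]
      constructor
      · rw [Finset.insert_erase h]; exact hB
      · exact le_refl _
    · have hval : ((Equiv.ofBijective F hFbij) x : α) =
          g ⟨x, Finset.mem_sdiff.2 ⟨x.2, h⟩⟩ := by
        simp [Equiv.ofBijective, hF, dif_neg h]
      rw [hval]
      exact ⟨(hgprop _).2.1, (hgprop _).2.2⟩
  · intro x hxB
    simp [Equiv.ofBijective, hF, dif_pos hxB]
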